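/- Let ρ be positive definite on a finite-dimensional Hilbert space, H Hermitian, and suppose L, L' ∈ ℕ with eigenstates |Ψ₀⟩,|Ψ₁⟩ of H^{(L)} having eigenvalues ℰ₀ < ℰ₁, and eigenstates |Ψ'₀⟩,|Ψ'₁⟩ of H^{(L')}. Define S_i = -log⟨Ψ_i|ρ^{⊗L}|Ψ_i⟩, β = (S₁-S₀)/(ℰ₁-ℰ₀), and analogously Δℰ' and ΔS' for the primed states, assuming Δℰ' > 0 or (Δℰ' = 0 and ΔS' ≥ 0). If β < 0 or ΔS' ≠ β·Δℰ', then there exist m, m' ∈ ℕ such that the unitary O built from B_{ij} = (|Ψ_i⟩⟨Ψ_j|)^{⊗m} ⊗ (|Ψ'_{1-i}⟩⟨Ψ'_{1-j}|)^{⊗m'} via O = I - ∑_{i,j}(-1)^{i-j}B_{ij} satisfies W(ρ^{⊗(mL+m'L')}, H^{(mL+m'L')}, O) > 0. -/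

import Mathlib

set_option linter.unusedSectionVars false
set_option maxHeartbeats 1000000

open Matrix ComplexOrder

/-- The operator acting as `H` on site `k` and as the identity elsewhere. -/
def siteOp {n : Type*} [Fintype n] [DecidableEq n] {ι : Type*} [Fintype ι] [DecidableEq ι]
    (H : Matrix n n ℂ) (k : ι) : Matrix (ι → n) (ι → n) ℂ :=
  Matrix.of fun a b => (if ∀ j, j ≠ k → a j = b j then 1 else 0) * H (a k) (b k)

/-- The extensive Hamiltonian `H^{(ι)} = ∑_k I⊗⋯⊗H⊗⋯⊗I`. -/
noncomputable def extOp {n : Type*} [Fintype n] [DecidableEq n]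
    (H : Matrix n n ℂ) (ι : Type*) [Fintype ι] [DecidableEq ι] :
    Matrix (ι → n) (ι → n) ℂ :=
  ∑ k : ι, siteOp H k

/-- The tensor power `ρ^{⊗ι}` of a state. -/
noncomputable def tensorState {n : Type*} [Fintype n]
    (ρ : Matrix n n ℂ) (ι : Type*) [Fintype ι] : Matrix (ι → n) (ι → n) ℂ :=
  Matrix.of fun a b => ∏ s : ι, ρ (a s) (b s)

/-- `B_{ij} = (|Ψ_i⟩⟨Ψ_j|)^{⊗m} ⊗ (|Ψ'_{1-i}⟩⟨Ψ'_{1-j}|)^{⊗m'}` as a matrix on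
`ℋ^{⊗(mL+m'L')}`, whose copies are indexed by `Fin m × Fin L ⊕ Fin m' × Fin L'`. -/
noncomputable def Bmat {n : Type*} [Fintype n] [DecidableEq n] (L L' m m' : ℕ)
    (Ψ : Fin 2 → (Fin L → n) → ℂ) (Ψ' : Fin 2 → (Fin L' → n) → ℂ) (i j : Fin 2) :
    Matrix ((Fin m × Fin L ⊕ Fin m' × Fin L') → n)
      ((Fin m × Fin L ⊕ Fin m' × Fin L') → n) ℂ :=
  Matrix.of fun a b =>
    (∏ c : Fin m,
      Ψ i (fun k => a (Sum.inl (c, k))) * star (Ψ j (fun k => b (Sum.inl (c, k))))) *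
    (∏ c : Fin m',
      Ψ' (1 - i) (fun k => a (Sum.inr (c, k))) * star (Ψ' (1 - j) (fun k => b (Sum.inr (c, k)))))

/-- `O = I - ∑_{i,j}(-1)^{i-j}B_{ij}`. -/
noncomputable def Omat {n : Type*} [Fintype n] [DecidableEq n] (L L' m m' : ℕ)
    (Ψ : Fin 2 → (Fin L → n) → ℂ) (Ψ' : Fin 2 → (Fin L' → n) → ℂ) :
    Matrix ((Fin m × Fin L ⊕ Fin m' × Fin L') → n)
      ((Fin m × Fin L ⊕ Fin m' × Fin L') → n) ℂ :=
  1 - ∑ i : Fin 2, ∑ j : Fin 2, ((-1 : ℂ)) ^ ((i : ℕ) + (j : ℕ)) • Bmat L L' m m' Ψ Ψ' i j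

/-! ### Auxiliary lemmas on rank-one matrices -/

section vmv
variable {μ : Type*} [Fintype μ] [DecidableEq μ]

lemma trace_mul_vecMulVec (A : Matrix μ μ ℂ) (u v : μ → ℂ) :
    (A * vecMulVec u v).trace = v ⬝ᵥ A.mulVec u := by
  simp only [trace, diag, mul_apply, vecMulVec_apply, dotProduct, mulVec, Finset.mul_sum]
  exact Finset.sum_congr rfl fun i _ => Finset.sum_congr rfl fun j _ => by ring

lemma mul_vecMulVec' (A : Matrix μ μ ℂ) (u v : μ → ℂ) :
    A * vecMulVec u v = vecMulVec (A.mulVec u) v := by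
  ext a b
  simp only [mul_apply, vecMulVec_apply, mulVec, dotProduct, Finset.sum_mul]
  exact Finset.sum_congr rfl fun i _ => by ring

lemma vecMulVec_mul' (A : Matrix μ μ ℂ) (u v : μ → ℂ) :
    vecMulVec u v * A = vecMulVec u (A.vecMul v) := by
  ext a b
  simp only [mul_apply, vecMulVec_apply, vecMul, dotProduct, Finset.mul_sum]
  exact Finset.sum_congr rfl fun i _ => by ring

lemma vecMulVec_mul_vecMulVec (u v x y : μ → ℂ) :
    vecMulVec u v * vecMulVec x y = (v ⬝ᵥ x) • vecMulVec u y := by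
  ext a b
  simp only [mul_apply, vecMulVec_apply, Matrix.smul_apply, dotProduct, Finset.sum_mul, smul_eq_mul]
  exact Finset.sum_congr rfl fun i _ => by ring

lemma conjTranspose_vecMulVec (u v : μ → ℂ) :
    (vecMulVec u (star v))ᴴ = vecMulVec v (star u) := by
  ext a b
  simp [vecMulVec_apply, conjTranspose_apply, mul_comm]

lemma vecMulVec_smul_left (c : ℂ) (u v : μ → ℂ) :
    vecMulVec (c • u) v = c • vecMulVec u v := by
  ext a b
  simp [vecMulVec_apply, mul_assoc]

lemma vecMulVec_smul_right (c : ℂ) (u v : μ → ℂ) :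
    vecMulVec u (c • v) = c • vecMulVec u v := by
  ext a b
  simp [vecMulVec_apply, smul_eq_mul]
  ring
end vmv

/-! ### Lemmas about `siteOp` and `extOp` -/

section site
variable {n : Type*} [Fintype n] [DecidableEq n] {ι : Type*} [Fintype ι] [DecidableEq ι]

lemma siteOp_mulVec (H : Matrix n n ℂ) (k : ι) (v : (ι → n) → ℂ) (a : ι → n) :
    (siteOp H k).mulVec v a = ∑ x, H (a k) x * v (Function.update a k x) := by
  have key : ∀ b : ι → n, (if ∀ j, j ≠ k → a j = b j then (1:ℂ) else 0) * H (a k) (b k) * v b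
      = ∑ x, if Function.update a k x = b then H (a k) x * v b else 0 := by
    intro b
    rw [Finset.sum_eq_single (b k)]
    · by_cases hc : ∀ j, j ≠ k → a j = b j
      · have hupd : Function.update a k (b k) = b := funext fun j => by
          rcases eq_or_ne j k with rfl | hj
          · simp
          · simp [Function.update_of_ne hj, hc j hj]
        rw [if_pos hupd, if_pos hc]; ring
      · have hupd : Function.update a k (b k) ≠ b := fun h => hc fun j hj => by
          rw [← h]; simp [Function.update_of_ne hj]
        simp only [if_neg hc, if_neg hupd]; ring
    · intro x _ hx
      have : Function.update a k x ≠ b := fun h => hx (by rw [← h]; simp)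
      simp [this]
    · simp
  simp only [mulVec, dotProduct, siteOp, of_apply]
  calc ∑ b, (if ∀ j, j ≠ k → a j = b j then (1:ℂ) else 0) * H (a k) (b k) * v b
      = ∑ b, ∑ x, if Function.update a k x = b then H (a k) x * v b else 0 :=
        Finset.sum_congr rfl fun b _ => key b
    _ = ∑ x, ∑ b, if Function.update a k x = b then H (a k) x * v b else 0 :=
        Finset.sum_comm
    _ = ∑ x, H (a k) x * v (Function.update a k x) := by
        refine Finset.sum_congr rfl fun x _ => ?_
        rw [Finset.sum_ite_eq]
        simp

lemma siteOp_isHermitian {H : Matrix n n ℂ} (hH : H.IsHermitian) (k : ι) :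
    (siteOp H k).IsHermitian := by
  refine IsHermitian.ext fun a b => ?_
  simp only [siteOp, of_apply]
  have h1 : (∀ j, j ≠ k → b j = a j) ↔ (∀ j, j ≠ k → a j = b j) :=
    ⟨fun h j hj => (h j hj).symm, fun h j hj => (h j hj).symm⟩
  rw [star_mul', apply_ite (star : ℂ → ℂ), star_one, star_zero, hH.apply,
    if_congr h1 rfl rfl]

lemma extOp_isHermitian {H : Matrix n n ℂ} (hH : H.IsHermitian) :
    (extOp H ι).IsHermitian := by
  unfold extOp Matrix.IsHermitian
  rw [conjTranspose_sum]
  exact Finset.sum_congr rfl fun k _ => siteOp_isHermitian hH k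
end site

/-! ### Lemmas about `tensorState` -/

section tensor
variable {n : Type*} [Fintype n] [DecidableEq n] {ι : Type*} [Fintype ι] [DecidableEq ι]

lemma tensorState_mul (A B : Matrix n n ℂ) :
    tensorState A ι * tensorState B ι = tensorState (A * B) ι := by
  ext a b
  simp only [tensorState, mul_apply, of_apply]
  calc ∑ x : ι → n, (∏ s, A (a s) (x s)) * ∏ s, B (x s) (b s)
      = ∑ x : ι → n, ∏ s, A (a s) (x s) * B (x s) (b s) :=
        Finset.sum_congr rfl fun x _ => Finset.prod_mul_distrib.symm
    _ = ∏ s, ∑ c, A (a s) c * B c (b s) :=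
        (Fintype.prod_sum fun s c => A (a s) c * B c (b s)).symm

lemma tensorState_one : tensorState (1 : Matrix n n ℂ) ι = 1 := by
  ext a b
  simp only [tensorState, of_apply, one_apply]
  rw [Finset.prod_boole]
  simp [funext_iff]

lemma tensorState_conjTranspose (A : Matrix n n ℂ) :
    (tensorState A ι)ᴴ = tensorState Aᴴ ι := by
  ext a b
  simp [tensorState, conjTranspose_apply]

lemma tensorState_posDef {ρ : Matrix n n ℂ} (hρ : ρ.PosDef) :
    (tensorState ρ (ι := ι)).PosDef := by
  open scoped MatrixOrder in
  set S := CFC.sqrt ρ with hSdef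
  open scoped MatrixOrder in
  have hSmul : S * S = ρ := CFC.sqrt_mul_sqrt_self ρ hρ.posSemidef.nonneg
  open scoped MatrixOrder in
  have hSh : S.IsHermitian := (CFC.sqrt_nonneg ρ).posSemidef.1
  have hSunit : IsUnit S.det := by
    have hd : S.det * S.det = ρ.det := by rw [← det_mul, hSmul]
    exact isUnit_iff_ne_zero.mpr fun h => hρ.det_pos.ne' (by rw [← hd, h, mul_zero])
  have hfact : tensorState ρ ι = (tensorState S ι)ᴴ * tensorState S ι := by
    rw [tensorState_conjTranspose, hSh.eq, tensorState_mul, hSmul]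
  have hinj : ∀ x : (ι → n) → ℂ, (tensorState S ι).mulVec x = 0 → x = 0 := by
    intro x hx
    have h1 : tensorState S⁻¹ ι * tensorState S ι = 1 := by
      rw [tensorState_mul, nonsing_inv_mul _ hSunit, tensorState_one]
    have := congrArg (fun v => (tensorState S⁻¹ ι).mulVec v) hx
    simpa [mulVec_mulVec, h1] using this
  refine PosDef.of_dotProduct_mulVec_pos ?_ ?_
  · rw [hfact]
    exact (posSemidef_conjTranspose_mul_self _).1
  · intro x hx
    rw [hfact, ← mulVec_mulVec, dotProduct_mulVec, ← star_mulVec]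
    exact dotProduct_star_self_pos_iff.mpr (fun h => hx (hinj x h))
end tensor

/-! ### Eigenvector lemmas for `extOp` on tensor factors -/

section eig
variable {n : Type*} [Fintype n] [DecidableEq n]

lemma extOp_mulVec_apply {σ : Type*} [Fintype σ] [DecidableEq σ]
    (H : Matrix n n ℂ) (v : (σ → n) → ℂ) (a : σ → n) :
    (extOp H σ).mulVec v a = ∑ k, ∑ x, H (a k) x * v (Function.update a k x) := by
  unfold extOp
  have : ((∑ k : σ, siteOp H k) *ᵥ v) a = ∑ k : σ, ((siteOp H k) *ᵥ v) a := by
    simp only [mulVec, dotProduct, Matrix.sum_apply, Finset.sum_mul]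
    exact Finset.sum_comm
  rw [this]
  exact Finset.sum_congr rfl fun k _ => siteOp_mulVec H k v a

lemma extOp_mulVec_tensor {σ τ : Type*} [Fintype σ] [DecidableEq σ] [Fintype τ] [DecidableEq τ]
    (H : Matrix n n ℂ) (F : (σ → n) → ℂ) (G : (τ → n) → ℂ) (μ ν : ℂ)
    (hF : (extOp H σ).mulVec F = μ • F) (hG : (extOp H τ).mulVec G = ν • G) :
    (extOp H (σ ⊕ τ)).mulVec
      (fun a => F (fun s => a (Sum.inl s)) * G (fun t => a (Sum.inr t)))
    = (μ + ν) • fun a => F (fun s => a (Sum.inl s)) * G (fun t => a (Sum.inr t)) := by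
  funext a
  rw [extOp_mulVec_apply]
  rw [Fintype.sum_sum_type]
  have hL : ∀ (s : σ) (x : n),
      (fun s' => Function.update a (Sum.inl s) x (Sum.inl s')) =
        Function.update (fun s' => a (Sum.inl s')) s x := by
    intro s x
    funext s'
    rcases eq_or_ne s' s with rfl | hs
    · simp
    · rw [Function.update_of_ne (fun h => hs (Sum.inl.inj h)),
        Function.update_of_ne hs]
  have hL' : ∀ (s : σ) (x : n),
      (fun t => Function.update a (Sum.inl s) x (Sum.inr t)) =
        fun t => a (Sum.inr t) := by
    intro s x; funext t; exact Function.update_of_ne (fun h => Sum.inr_ne_inl h) _ _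
  have hR : ∀ (t : τ) (x : n),
      (fun t' => Function.update a (Sum.inr t) x (Sum.inr t')) =
        Function.update (fun t' => a (Sum.inr t')) t x := by
    intro t x
    funext t'
    rcases eq_or_ne t' t with rfl | ht
    · simp
    · rw [Function.update_of_ne (fun h => ht (Sum.inr.inj h)),
        Function.update_of_ne ht]
  have hR' : ∀ (t : τ) (x : n),
      (fun s => Function.update a (Sum.inr t) x (Sum.inl s)) =
        fun s => a (Sum.inl s) := by
    intro t x; funext s; exact Function.update_of_ne (fun h => Sum.inl_ne_inr h) _ _
  have e1 : ∑ s : σ, ∑ x, H (a (Sum.inl s)) x *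
      ((fun a => F (fun s' => a (Sum.inl s')) * G (fun t => a (Sum.inr t)))
        (Function.update a (Sum.inl s) x))
      = μ * F (fun s => a (Sum.inl s)) * G (fun t => a (Sum.inr t)) := by
    calc ∑ s : σ, ∑ x, H (a (Sum.inl s)) x *
          (F (fun s' => Function.update a (Sum.inl s) x (Sum.inl s')) *
            G (fun t => Function.update a (Sum.inl s) x (Sum.inr t)))
        = (∑ s : σ, ∑ x, H ((fun s' => a (Sum.inl s')) s) x *
            F (Function.update (fun s' => a (Sum.inl s')) s x)) *
              G (fun t => a (Sum.inr t)) := by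
          rw [Finset.sum_mul]
          refine Finset.sum_congr rfl fun s _ => ?_
          rw [Finset.sum_mul]
          refine Finset.sum_congr rfl fun x _ => ?_
          rw [hL s x, hL' s x]; ring
      _ = μ * F (fun s => a (Sum.inl s)) * G (fun t => a (Sum.inr t)) := by
          rw [← extOp_mulVec_apply, hF]
          simp only [Pi.smul_apply, smul_eq_mul]
  have e2 : ∑ t : τ, ∑ x, H (a (Sum.inr t)) x *
      ((fun a => F (fun s => a (Sum.inl s)) * G (fun t' => a (Sum.inr t')))
        (Function.update a (Sum.inr t) x))
      = ν * F (fun s => a (Sum.inl s)) * G (fun t => a (Sum.inr t)) := by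
    calc ∑ t : τ, ∑ x, H (a (Sum.inr t)) x *
          (F (fun s => Function.update a (Sum.inr t) x (Sum.inl s)) *
            G (fun t' => Function.update a (Sum.inr t) x (Sum.inr t')))
        = (∑ t : τ, ∑ x, H ((fun t' => a (Sum.inr t')) t) x *
            G (Function.update (fun t' => a (Sum.inr t')) t x)) *
              F (fun s => a (Sum.inl s)) := by
          rw [Finset.sum_mul]
          refine Finset.sum_congr rfl fun t _ => ?_
          rw [Finset.sum_mul]
          refine Finset.sum_congr rfl fun x _ => ?_
          rw [hR t x, hR' t x]; ring
      _ = ν * F (fun s => a (Sum.inl s)) * G (fun t => a (Sum.inr t)) := by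
          rw [← extOp_mulVec_apply, hG]
          simp only [Pi.smul_apply, smul_eq_mul]
          ring
  rw [e1, e2]
  simp only [Pi.smul_apply, smul_eq_mul]
  ring

lemma extOp_mulVec_pow {σ : Type*} [Fintype σ] [DecidableEq σ] (N : ℕ)
    (H : Matrix n n ℂ) (F : (σ → n) → ℂ) (μ : ℂ)
    (hF : (extOp H σ).mulVec F = μ • F) :
    (extOp H (Fin N × σ)).mulVec (fun a => ∏ c, F (fun k => a (c, k)))
    = ((N : ℂ) * μ) • fun a => ∏ c, F (fun k => a (c, k)) := by
  funext a
  rw [extOp_mulVec_apply]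
  rw [Fintype.sum_prod_type]
  have key : ∀ c : Fin N, ∑ k, ∑ x, H (a (c, k)) x *
      ((fun a => ∏ c', F (fun k' => a (c', k'))) (Function.update a (c, k) x))
      = μ * ∏ c', F (fun k' => a (c', k')) := by
    intro c
    have hupd : ∀ (k : σ) (x : n) (c' : Fin N), c' ≠ c →
        (fun k' => Function.update a (c, k) x (c', k')) = fun k' => a (c', k') := by
      intro k x c' hc'
      funext k'
      exact Function.update_of_ne (fun h => hc' (congrArg Prod.fst h)) _ _
    have hupd2 : ∀ (k : σ) (x : n),
        (fun k' => Function.update a (c, k) x (c, k')) =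
          Function.update (fun k' => a (c, k')) k x := by
      intro k x
      funext k'
      rcases eq_or_ne k' k with rfl | hk
      · simp
      · rw [Function.update_of_ne (fun h => hk (congrArg Prod.snd h)),
          Function.update_of_ne hk]
    calc ∑ k, ∑ x, H (a (c, k)) x * ∏ c', F (fun k' => Function.update a (c, k) x (c', k'))
        = (∑ k, ∑ x, H ((fun k' => a (c, k')) k) x *
            F (Function.update (fun k' => a (c, k')) k x)) *
            ∏ c' ∈ Finset.univ.erase c, F (fun k' => a (c', k')) := by
          rw [Finset.sum_mul]
          refine Finset.sum_congr rfl fun k _ => ?_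
          rw [Finset.sum_mul]
          refine Finset.sum_congr rfl fun x _ => ?_
          rw [← Finset.mul_prod_erase Finset.univ _ (Finset.mem_univ c)]
          rw [hupd2 k x]
          rw [Finset.prod_congr rfl fun c' hc' => by
            rw [hupd k x c' (Finset.ne_of_mem_erase hc')]]
          ring
      _ = μ * ∏ c', F (fun k' => a (c', k')) := by
          rw [← extOp_mulVec_apply, hF]
          simp only [Pi.smul_apply, smul_eq_mul]
          rw [mul_assoc, Finset.mul_prod_erase Finset.univ
            (fun c' => F fun k' => a (c', k')) (Finset.mem_univ c)]
  calc ∑ c : Fin N, ∑ k, ∑ x, H (a (c, k)) x *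
        ((fun a => ∏ c', F (fun k' => a (c', k'))) (Function.update a (c, k) x))
      = ∑ c : Fin N, μ * ∏ c', F (fun k' => a (c', k')) :=
        Finset.sum_congr rfl fun c _ => key c
    _ = ((N : ℂ) * μ) • ∏ c', F (fun k' => a (c', k')) := by
        rw [Finset.sum_const]
        simp [smul_eq_mul]; ring
end eig

/-! ### Factorization of sums over tensor-product index types -/

section pairing
variable {n : Type*} [Fintype n] [DecidableEq n]

lemma pair_sum_factor {σ τ : Type*} [Fintype σ] [Fintype τ] [DecidableEq σ] [DecidableEq τ]
    (F : (σ → n) → (σ → n) → ℂ) (G : (τ → n) → (τ → n) → ℂ) :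
    (∑ a : (σ ⊕ τ) → n, ∑ b : (σ ⊕ τ) → n,
      F (fun s => a (Sum.inl s)) (fun s => b (Sum.inl s)) *
        G (fun t => a (Sum.inr t)) (fun t => b (Sum.inr t)))
    = (∑ u : σ → n, ∑ v : σ → n, F u v) * ∑ u : τ → n, ∑ v : τ → n, G u v := by
  let e : ((σ → n) × (τ → n)) ≃ ((σ ⊕ τ) → n) := (Equiv.sumArrowEquivProdArrow σ τ n).symm
  calc (∑ a : (σ ⊕ τ) → n, ∑ b : (σ ⊕ τ) → n,
        F (fun s => a (Sum.inl s)) (fun s => b (Sum.inl s)) *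
          G (fun t => a (Sum.inr t)) (fun t => b (Sum.inr t)))
      = ∑ p : (σ → n) × (τ → n), ∑ q : (σ → n) × (τ → n), F p.1 q.1 * G p.2 q.2 := by
        refine (Fintype.sum_equiv e _ _ fun p => ?_).symm
        exact Fintype.sum_equiv e _ _ fun q => rfl
    _ = ∑ u : σ → n, ∑ w : τ → n, ∑ v : σ → n, ∑ z : τ → n, F u v * G w z := by
        simp only [Fintype.sum_prod_type]
    _ = (∑ u : σ → n, ∑ v : σ → n, F u v) * ∑ u : τ → n, ∑ v : τ → n, G u v := by
        rw [Finset.sum_mul_sum]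
        refine Finset.sum_congr rfl fun u _ => ?_
        refine Finset.sum_congr rfl fun w _ => ?_
        exact (Finset.sum_mul_sum _ _ _ _).symm

lemma block_sum_factor {σ : Type*} [Fintype σ] [DecidableEq σ] (N : ℕ)
    (F : (σ → n) → (σ → n) → ℂ) :
    (∑ a : (Fin N × σ) → n, ∑ b : (Fin N × σ) → n,
      ∏ c, F (fun k => a (c, k)) (fun k => b (c, k)))
    = (∑ u : σ → n, ∑ v : σ → n, F u v) ^ N := by
  let e : (Fin N → σ → n) ≃ ((Fin N × σ) → n) := (Equiv.curry _ _ _).symm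
  let e2 : (Fin N → (σ → n) × (σ → n)) ≃ ((Fin N → σ → n) × (Fin N → σ → n)) :=
    Equiv.arrowProdEquivProdArrow _ _ _
  calc (∑ a : (Fin N × σ) → n, ∑ b : (Fin N × σ) → n,
        ∏ c, F (fun k => a (c, k)) (fun k => b (c, k)))
      = ∑ f : Fin N → σ → n, ∑ g : Fin N → σ → n, ∏ c, F (f c) (g c) := by
        refine (Fintype.sum_equiv e _ _ fun f => ?_).symm
        exact Fintype.sum_equiv e _ _ fun g => rfl
    _ = ∑ p : (Fin N → σ → n) × (Fin N → σ → n), ∏ c, F (p.1 c) (p.2 c) := by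
        rw [Fintype.sum_prod_type]
    _ = ∑ w : Fin N → (σ → n) × (σ → n), ∏ c, F ((w c).1) ((w c).2) :=
        (Fintype.sum_equiv e2 _ _ fun w => rfl).symm
    _ = ∏ c : Fin N, ∑ p : (σ → n) × (σ → n), F p.1 p.2 :=
        (Fintype.prod_sum fun (_ : Fin N) (p : (σ → n) × (σ → n)) => F p.1 p.2).symm
    _ = ∏ _c : Fin N, ∑ u : σ → n, ∑ v : σ → n, F u v := by
        refine Finset.prod_congr rfl fun c _ => ?_
        rw [Fintype.sum_prod_type]
    _ = (∑ u : σ → n, ∑ v : σ → n, F u v) ^ N := by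
        rw [Finset.prod_const, Finset.card_univ, Fintype.card_fin]
end pairing

/-! ### The tensor-product eigenvectors `Φ_i` -/

section phi
variable {n : Type*} [Fintype n] [DecidableEq n] (L L' m m' : ℕ)
  (Ψ : Fin 2 → (Fin L → n) → ℂ) (Ψ' : Fin 2 → (Fin L' → n) → ℂ)

noncomputable def Phi (i : Fin 2) : ((Fin m × Fin L ⊕ Fin m' × Fin L') → n) → ℂ :=
  fun a => (∏ c : Fin m, Ψ i fun k => a (Sum.inl (c, k))) *
    ∏ c : Fin m', Ψ' (1 - i) fun k => a (Sum.inr (c, k))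

lemma Bmat_eq (i j : Fin 2) :
    Bmat L L' m m' Ψ Ψ' i j =
      vecMulVec (Phi L L' m m' Ψ Ψ' i) (star (Phi L L' m m' Ψ Ψ' j)) := by
  ext a b
  simp only [Bmat, Phi, of_apply, vecMulVec_apply, Pi.star_apply, star_mul', star_prod,
    Finset.prod_mul_distrib]
  ring

lemma phi_pairing (ρ : Matrix n n ℂ) (i j : Fin 2) :
    star (Phi L L' m m' Ψ Ψ' j) ⬝ᵥ
        (tensorState ρ (Fin m × Fin L ⊕ Fin m' × Fin L')).mulVec (Phi L L' m m' Ψ Ψ' i)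
    = (star (Ψ j) ⬝ᵥ (tensorState ρ (Fin L)).mulVec (Ψ i)) ^ m *
        (star (Ψ' (1 - j)) ⬝ᵥ (tensorState ρ (Fin L')).mulVec (Ψ' (1 - i))) ^ m' := by
  have hinner : ∀ (Λ : ℕ) (ψ φ : (Fin Λ → n) → ℂ),
      (∑ u : Fin Λ → n, ∑ v : Fin Λ → n, star (ψ u) * (∏ k, ρ (u k) (v k)) * φ v)
        = star ψ ⬝ᵥ (tensorState ρ (Fin Λ)).mulVec φ := by
    intro Λ ψ φ
    simp only [dotProduct, mulVec, tensorState, of_apply, Pi.star_apply, Finset.mul_sum]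
    exact Finset.sum_congr rfl fun u _ => Finset.sum_congr rfl fun v _ => by ring
  calc star (Phi L L' m m' Ψ Ψ' j) ⬝ᵥ
        (tensorState ρ (Fin m × Fin L ⊕ Fin m' × Fin L')).mulVec (Phi L L' m m' Ψ Ψ' i)
      = ∑ a : (Fin m × Fin L ⊕ Fin m' × Fin L') → n,
          ∑ b : (Fin m × Fin L ⊕ Fin m' × Fin L') → n,
          star (Phi L L' m m' Ψ Ψ' j a) *
            ((∏ s, ρ (a s) (b s)) * Phi L L' m m' Ψ Ψ' i b) := by
        simp only [dotProduct, mulVec, tensorState, of_apply, Pi.star_apply, Finset.mul_sum]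
    _ = ∑ a : (Fin m × Fin L ⊕ Fin m' × Fin L') → n,
          ∑ b : (Fin m × Fin L ⊕ Fin m' × Fin L') → n,
          (fun u v => ∏ c : Fin m, (star (Ψ j fun k => u (c, k)) *
              (∏ k, ρ (u (c, k)) (v (c, k))) * Ψ i fun k => v (c, k)))
            (fun s => a (Sum.inl s)) (fun s => b (Sum.inl s)) *
          (fun u v => ∏ c : Fin m', (star (Ψ' (1 - j) fun k => u (c, k)) *
              (∏ k, ρ (u (c, k)) (v (c, k))) * Ψ' (1 - i) fun k => v (c, k)))
            (fun t => a (Sum.inr t)) (fun t => b (Sum.inr t)) := by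
        refine Finset.sum_congr rfl fun a _ => Finset.sum_congr rfl fun b _ => ?_
        simp only [Phi, star_mul', star_prod, Fintype.prod_sum_type, Fintype.prod_prod_type,
          Finset.prod_mul_distrib]
        ring
    _ = (∑ u : Fin m × Fin L → n, ∑ v : Fin m × Fin L → n,
            ∏ c : Fin m, (star (Ψ j fun k => u (c, k)) *
              (∏ k, ρ (u (c, k)) (v (c, k))) * Ψ i fun k => v (c, k))) *
        (∑ u : Fin m' × Fin L' → n, ∑ v : Fin m' × Fin L' → n,
            ∏ c : Fin m', (star (Ψ' (1 - j) fun k => u (c, k)) *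
              (∏ k, ρ (u (c, k)) (v (c, k))) * Ψ' (1 - i) fun k => v (c, k))) :=
        pair_sum_factor (σ := Fin m × Fin L) (τ := Fin m' × Fin L')
          (fun u v => ∏ c : Fin m, (star (Ψ j fun k => u (c, k)) *
              (∏ k, ρ (u (c, k)) (v (c, k))) * Ψ i fun k => v (c, k)))
          (fun u v => ∏ c : Fin m', (star (Ψ' (1 - j) fun k => u (c, k)) *
              (∏ k, ρ (u (c, k)) (v (c, k))) * Ψ' (1 - i) fun k => v (c, k)))
    _ = (∑ u : Fin L → n, ∑ v : Fin L → n,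
            star (Ψ j u) * (∏ k, ρ (u k) (v k)) * Ψ i v) ^ m *
        (∑ u : Fin L' → n, ∑ v : Fin L' → n,
            star (Ψ' (1 - j) u) * (∏ k, ρ (u k) (v k)) * Ψ' (1 - i) v) ^ m' := by
        rw [block_sum_factor (σ := Fin L) m
            (fun u v => star (Ψ j u) * (∏ k, ρ (u k) (v k)) * Ψ i v),
          block_sum_factor (σ := Fin L') m'
            (fun u v => star (Ψ' (1 - j) u) * (∏ k, ρ (u k) (v k)) * Ψ' (1 - i) v)]
    _ = (star (Ψ j) ⬝ᵥ (tensorState ρ (Fin L)).mulVec (Ψ i)) ^ m *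
        (star (Ψ' (1 - j)) ⬝ᵥ (tensorState ρ (Fin L')).mulVec (Ψ' (1 - i))) ^ m' := by
        rw [hinner, hinner]

lemma phi_dot (i j : Fin 2) :
    star (Phi L L' m m' Ψ Ψ' j) ⬝ᵥ Phi L L' m m' Ψ Ψ' i
    = (star (Ψ j) ⬝ᵥ Ψ i) ^ m * (star (Ψ' (1 - j)) ⬝ᵥ Ψ' (1 - i)) ^ m' := by
  have := phi_pairing L L' m m' Ψ Ψ' (1 : Matrix n n ℂ) i j
  rw [tensorState_one, one_mulVec] at this
  rw [this, tensorState_one, tensorState_one, one_mulVec, one_mulVec]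
end phi



/-! ### Normalization and orthogonality of eigenvectors -/

section ortho
variable {n : Type*} [Fintype n] [DecidableEq n]

lemma dot_self_of_norm {α : Type*} [Fintype α] (ψ : α → ℂ)
    (h : ∑ a, ‖ψ a‖ ^ 2 = 1) : star ψ ⬝ᵥ ψ = 1 := by
  have key : star ψ ⬝ᵥ ψ = ((∑ a, ‖ψ a‖ ^ 2 : ℝ) : ℂ) := by
    rw [dotProduct]
    push_cast
    refine Finset.sum_congr rfl fun a _ => ?_
    simp only [Pi.star_apply, Complex.star_def]
    rw [mul_comm, Complex.mul_conj']
  rw [key, h]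
  norm_num

lemma eig_orthogonal {σ : Type*} [Fintype σ] [DecidableEq σ] {H : Matrix n n ℂ}
    (hH : H.IsHermitian) (ψ0 ψ1 : (σ → n) → ℂ) (E0 E1 : ℝ) (hne : E0 ≠ E1)
    (h0 : (extOp H σ).mulVec ψ0 = ((E0 : ℝ) : ℂ) • ψ0)
    (h1 : (extOp H σ).mulVec ψ1 = ((E1 : ℝ) : ℂ) • ψ1) :
    star ψ0 ⬝ᵥ ψ1 = 0 := by
  have hh : (extOp H σ).IsHermitian := extOp_isHermitian hH
  have k1 : star ψ0 ⬝ᵥ (extOp H σ).mulVec ψ1 = ((E1 : ℝ) : ℂ) * (star ψ0 ⬝ᵥ ψ1) := by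
    rw [h1, dotProduct_smul, smul_eq_mul]
  have k2 : star ψ0 ⬝ᵥ (extOp H σ).mulVec ψ1 = ((E0 : ℝ) : ℂ) * (star ψ0 ⬝ᵥ ψ1) := by
    rw [dotProduct_mulVec]
    have hvm : star ψ0 ᵥ* extOp H σ = ((E0 : ℝ) : ℂ) • star ψ0 := by
      calc star ψ0 ᵥ* extOp H σ = star ψ0 ᵥ* (extOp H σ)ᴴ := by rw [hh.eq]
        _ = star ((extOp H σ) *ᵥ ψ0) := (star_mulVec _ _).symm
        _ = ((E0 : ℝ) : ℂ) • star ψ0 := by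
            rw [h0, star_smul]
            simp [Complex.star_def, Complex.conj_ofReal]
    rw [hvm, smul_dotProduct, smul_eq_mul]
  have hz : ((E1 - E0 : ℝ) : ℂ) * (star ψ0 ⬝ᵥ ψ1) = 0 := by
    push_cast
    rw [sub_mul, ← k1, ← k2, sub_self]
  rcases mul_eq_zero.mp hz with h | h
  · exfalso
    have h' : (E1 - E0 : ℝ) = 0 := by exact_mod_cast h
    exact hne (by linarith)
  · exact h
end ortho

/-! ### Choosing the repetition numbers -/

lemma rat_pick {x y : ℝ} (hx : 0 ≤ x) (hxy : x < y) :
    ∃ m m' : ℕ, 1 ≤ m ∧ x * m < m' ∧ (m' : ℝ) < y * m := by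
  obtain ⟨q, hq1, hq2⟩ := exists_rat_btwn hxy
  have hqpos : (0 : ℚ) < q := by exact_mod_cast lt_of_le_of_lt hx hq1
  have hden : (0 : ℝ) < (q.den : ℝ) := by exact_mod_cast q.pos
  have hnum : (0 : ℤ) < q.num := Rat.num_pos.mpr hqpos
  have hcast : ((q.num.toNat : ℕ) : ℝ) = ((q.num : ℤ) : ℝ) := by
    exact_mod_cast congrArg (Int.cast : ℤ → ℝ) (Int.toNat_of_nonneg hnum.le)
  have hqd : ((q : ℝ)) * q.den = (q.num : ℝ) := by
    rw [Rat.cast_def]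
    field_simp
  refine ⟨q.den, q.num.toNat, q.pos, ?_, ?_⟩
  · calc x * q.den < (q : ℝ) * q.den := mul_lt_mul_of_pos_right hq1 hden
      _ = (q.num : ℝ) := hqd
      _ = (q.num.toNat : ℝ) := hcast.symm
  · calc (q.num.toNat : ℝ) = (q.num : ℝ) := hcast
      _ = (q : ℝ) * q.den := hqd.symm
      _ < y * q.den := mul_lt_mul_of_pos_right hq2 hden

lemma choose_mm' (a b c d : ℝ) (ha : 0 < a)
    (h1 : 0 < b ∨ (b = 0 ∧ 0 ≤ d))
    (h2 : c < 0 ∨ a * d ≠ c * b) :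
    ∃ m m' : ℕ, 1 ≤ m ∧
      0 < ((m : ℝ) * a - (m' : ℝ) * b) * ((m' : ℝ) * d - (m : ℝ) * c) := by
  rcases lt_or_ge c 0 with hc | hc
  · -- β < 0 case: m = 1, m' = 0
    exact ⟨1, 0, le_refl 1, by push_cast; nlinarith⟩
  · have hne : a * d ≠ c * b := by
      rcases h2 with h | h
      · exact absurd h (not_lt.mpr hc)
      · exact h
    rcases h1 with hb | ⟨hb0, hd0⟩
    · -- b > 0
      rcases lt_trichotomy (a * d) (c * b) with hlt | heq | hgt
      · -- want m a < m' b and m' d < m c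
        rcases lt_or_ge d 0 with hd | hd
        · -- d < 0: m = 1, m' > a / b
          obtain ⟨m', hm'⟩ := exists_nat_gt (a / b)
          have hm'b : a < m' * b := by
            rw [div_lt_iff₀ hb] at hm'
            linarith
          have hm'pos : (0 : ℝ) < m' := lt_of_le_of_lt (div_pos ha hb).le hm'
          refine ⟨1, m', le_refl 1, ?_⟩
          push_cast
          have h1' : (1 : ℝ) * a - m' * b < 0 := by nlinarith
          have h2' : (m' : ℝ) * d - 1 * c < 0 := by nlinarith
          exact mul_pos_of_neg_of_neg h1' h2'
        · -- d ≥ 0; then c > 0 since c*b > a*d ≥ 0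
          have hcpos : 0 < c := by nlinarith
          rcases eq_or_lt_of_le hd with hd0 | hdpos
          · -- d = 0: m = 1, m' > a / b
            obtain ⟨m', hm'⟩ := exists_nat_gt (a / b)
            have hm'b : a < m' * b := by
              rw [div_lt_iff₀ hb] at hm'
              linarith
            refine ⟨1, m', le_refl 1, ?_⟩
            push_cast
            have h1' : (1 : ℝ) * a - m' * b < 0 := by nlinarith
            have h2' : (m' : ℝ) * d - 1 * c < 0 := by nlinarith [hd0.symm ▸ (le_refl d)]
            exact mul_pos_of_neg_of_neg h1' h2'
          · -- d > 0: pick m'/m in (a/b, c/d)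
            have hband : a / b < c / d := by
              rw [div_lt_div_iff₀ hb hdpos]
              nlinarith
            obtain ⟨m, m', hm, hx1, hx2⟩ := rat_pick (le_of_lt (div_pos ha hb)) hband
            refine ⟨m, m', hm, ?_⟩
            have hmpos : (0 : ℝ) < m := by exact_mod_cast hm
            have h1' : (m : ℝ) * a - m' * b < 0 := by
              rw [div_mul_eq_mul_div, div_lt_iff₀ hb] at hx1
              nlinarith
            have h2' : (m' : ℝ) * d - m * c < 0 := by
              rw [div_mul_eq_mul_div, lt_div_iff₀ hdpos] at hx2
              nlinarith
            exact mul_pos_of_neg_of_neg h1' h2'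
      · exact absurd heq hne
      · -- a d > c b: want m a > m' b and m' d > m c
        have hdpos : 0 < d := by nlinarith
        rcases eq_or_lt_of_le hc with hc0 | hcpos
        · -- c = 0: m' = 1, m > b / a
          obtain ⟨m, hm⟩ := exists_nat_gt (b / a)
          have hmb : b < m * a := by
            rw [div_lt_iff₀ ha] at hm
            linarith
          have hmpos : (0 : ℝ) < m := lt_of_le_of_lt (div_pos hb ha).le hm
          have hm1 : 1 ≤ m := Nat.one_le_iff_ne_zero.mpr (by
            rintro rfl; simp at hmpos)
          refine ⟨m, 1, hm1, ?_⟩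
          push_cast
          have h1' : (0 : ℝ) < m * a - 1 * b := by nlinarith
          have h2' : (0 : ℝ) < 1 * d - m * c := by nlinarith [hc0]
          exact mul_pos h1' h2'
        · -- c > 0: pick m'/m in (c/d, a/b)
          have hband : c / d < a / b := by
            rw [div_lt_div_iff₀ hdpos hb]
            nlinarith
          obtain ⟨m, m', hm, hx1, hx2⟩ := rat_pick (le_of_lt (div_pos hcpos hdpos)) hband
          refine ⟨m, m', hm, ?_⟩
          have hmpos : (0 : ℝ) < m := by exact_mod_cast hm
          have h1' : (0 : ℝ) < (m : ℝ) * a - m' * b := by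
            rw [div_mul_eq_mul_div, lt_div_iff₀ hb] at hx2
            nlinarith
          have h2' : (0 : ℝ) < (m' : ℝ) * d - m * c := by
            rw [div_mul_eq_mul_div, div_lt_iff₀ hdpos] at hx1
            nlinarith
          exact mul_pos h1' h2'
    · -- b = 0, d ≥ 0: then a*d ≠ 0 so d > 0; m = 1, m' > c / d
      have hd : 0 < d := by
        rcases eq_or_lt_of_le hd0 with h | h
        · exact absurd (by rw [← h, hb0]; ring) hne
        · exact h
      obtain ⟨m', hm'⟩ := exists_nat_gt (c / d)
      have hm'd : c < m' * d := by
        rw [div_lt_iff₀ hd] at hm'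
        linarith
      refine ⟨1, m', le_refl 1, ?_⟩
      push_cast
      rw [hb0]
      have h1' : (0 : ℝ) < 1 * a - (m' : ℝ) * 0 := by nlinarith
      have h2' : (0 : ℝ) < (m' : ℝ) * d - 1 * c := by nlinarith
      exact mul_pos h1' h2'

/-! ### The work extracted by `O` -/

section work
variable {n : Type*} [Fintype n] [DecidableEq n] (L L' m m' : ℕ)
  (Ψ : Fin 2 → (Fin L → n) → ℂ) (Ψ' : Fin 2 → (Fin L' → n) → ℂ)

lemma work_trace (H ρ : Matrix n n ℂ) (e : Fin 2 → ℂ)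
    (heig : ∀ i, (extOp H (Fin m × Fin L ⊕ Fin m' × Fin L')).mulVec (Phi L L' m m' Ψ Ψ' i)
      = e i • Phi L L' m m' Ψ Ψ' i)
    (hereal : ∀ i, star (e i) = e i)
    (hH : H.IsHermitian)
    (hdot : ∀ i j, star (Phi L L' m m' Ψ Ψ' i) ⬝ᵥ Phi L L' m m' Ψ Ψ' j
      = if i = j then 1 else 0) :
    ((tensorState ρ (Fin m × Fin L ⊕ Fin m' × Fin L')) *
      (extOp H (Fin m × Fin L ⊕ Fin m' × Fin L') -
        (Omat L L' m m' Ψ Ψ')ᴴ * extOp H (Fin m × Fin L ⊕ Fin m' × Fin L') *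
          Omat L L' m m' Ψ Ψ')).trace
    = (e 0 - e 1) *
        (star (Phi L L' m m' Ψ Ψ' 0) ⬝ᵥ
          (tensorState ρ (Fin m × Fin L ⊕ Fin m' × Fin L')).mulVec (Phi L L' m m' Ψ Ψ' 0)) +
      (e 1 - e 0) *
        (star (Phi L L' m m' Ψ Ψ' 1) ⬝ᵥ
          (tensorState ρ (Fin m × Fin L ⊕ Fin m' × Fin L')).mulVec (Phi L L' m m' Ψ Ψ' 1)) := by
  have hBmat := Bmat_eq L L' m m' Ψ Ψ'
  set Φ := Phi L L' m m' Ψ Ψ' with hΦ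
  set B := Bmat L L' m m' Ψ Ψ' with hBdef
  set Hx := extOp H (Fin m × Fin L ⊕ Fin m' × Fin L') with hHx
  set T := tensorState ρ (Fin m × Fin L ⊕ Fin m' × Fin L') with hT
  have hBH : ∀ i j, B i j * Hx = e j • B i j := by
    intro i j
    rw [hBmat, vecMulVec_mul']
    have hv : Hx.vecMul (star (Φ j)) = e j • star (Φ j) := by
      calc Matrix.vecMul (star (Φ j)) Hx
          = Matrix.vecMul (star (Φ j)) Hxᴴ := by rw [(extOp_isHermitian hH).eq]
        _ = star (Hx.mulVec (Φ j)) := (star_mulVec _ _).symm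
        _ = e j • star (Φ j) := by
            rw [heig j, star_smul, hereal j]
    rw [hv, vecMulVec_smul_right, ← hBmat]
  have hHB : ∀ i j, Hx * B i j = e i • B i j := by
    intro i j
    rw [hBmat, mul_vecMulVec', heig i, vecMulVec_smul_left, ← hBmat]
  have hBB : ∀ i j k l, B i j * B k l =
      (if j = k then (1 : ℂ) else 0) • B i l := by
    intro i j k l
    rw [hBmat, hBmat, _root_.vecMulVec_mul_vecMulVec, hdot, ← hBmat]
  have hBc : ∀ i j, (B i j)ᴴ = B j i := by
    intro i j
    rw [hBmat, _root_.conjTranspose_vecMulVec, ← hBmat]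
  have htrB : ∀ i j, (T * B i j).trace = star (Φ j) ⬝ᵥ T.mulVec (Φ i) := by
    intro i j
    rw [hBmat, trace_mul_vecMulVec]
  have hOmat : Omat L L' m m' Ψ Ψ' = 1 - (B 0 0 - B 0 1 - B 1 0 + B 1 1) := by
    unfold Omat
    rw [Fin.sum_univ_two, Fin.sum_univ_two, Fin.sum_univ_two]
    norm_num
    abel
  have key : Hx - (Omat L L' m m' Ψ Ψ')ᴴ * Hx * Omat L L' m m' Ψ Ψ' =
      (e 0 - e 1) • B 0 0 + (e 1 - e 0) • B 1 1 := by
    rw [hOmat]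
    simp only [conjTranspose_sub, conjTranspose_add, conjTranspose_one, hBc]
    simp only [mul_sub, sub_mul, mul_add, add_mul, mul_one, one_mul,
      Matrix.mul_smul, Matrix.smul_mul, hHB, hBH, hBB, smul_smul]
    norm_num
    module
  rw [key]
  rw [mul_add, trace_add, mul_smul_comm, mul_smul_comm, trace_smul, trace_smul,
    htrB, htrB]
  simp [smul_eq_mul]
end work

theorem positive_work_from_virtual_temperatures {n : Type*} [Fintype n] [DecidableEq n]
    (H : Matrix n n ℂ) (hH : H.IsHermitian)
    (ρ : Matrix n n ℂ) (hρ : ρ.PosDef) (hρtr : ρ.trace = 1)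
    (L L' : ℕ)
    (Ψ : Fin 2 → (Fin L → n) → ℂ) (Ψ' : Fin 2 → (Fin L' → n) → ℂ)
    (E E' : Fin 2 → ℝ)
    (hΨeig : ∀ i, (extOp H (Fin L)).mulVec (Ψ i) = ((E i : ℝ) : ℂ) • Ψ i)
    (hΨ'eig : ∀ i, (extOp H (Fin L')).mulVec (Ψ' i) = ((E' i : ℝ) : ℂ) • Ψ' i)
    (hΨnorm : ∀ i, ∑ a, ‖Ψ i a‖ ^ 2 = 1) (hΨ'norm : ∀ i, ∑ a, ‖Ψ' i a‖ ^ 2 = 1)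
    (hE : E 0 < E 1) :
    let S : Fin 2 → ℝ :=
      fun i => -Real.log ((star (Ψ i) ⬝ᵥ (tensorState ρ (Fin L)).mulVec (Ψ i)).re)
    let S' : Fin 2 → ℝ :=
      fun i => -Real.log ((star (Ψ' i) ⬝ᵥ (tensorState ρ (Fin L')).mulVec (Ψ' i)).re)
    let β : ℝ := (S 1 - S 0) / (E 1 - E 0)
    (0 < E' 1 - E' 0 ∨ (E' 1 - E' 0 = 0 ∧ 0 ≤ S' 1 - S' 0)) →
    (β < 0 ∨ S' 1 - S' 0 ≠ β * (E' 1 - E' 0)) →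
    ∃ m m' : ℕ,
      0 < ((tensorState ρ (Fin m × Fin L ⊕ Fin m' × Fin L') *
        (extOp H (Fin m × Fin L ⊕ Fin m' × Fin L') -
          (Omat L L' m m' Ψ Ψ')ᴴ * extOp H (Fin m × Fin L ⊕ Fin m' × Fin L') *
            Omat L L' m m' Ψ Ψ')).trace).re := by
  intro S S' β hyp1 hyp2
  classical
  have hTL : (tensorState ρ (Fin L)).PosDef := tensorState_posDef hρ
  have hTL' : (tensorState ρ (Fin L')).PosDef := tensorState_posDef hρ
  have hΨne : ∀ i, Ψ i ≠ 0 := by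
    intro i hzero
    have h := hΨnorm i
    rw [hzero] at h
    simp at h
  have hΨ'ne : ∀ i, Ψ' i ≠ 0 := by
    intro i hzero
    have h := hΨ'norm i
    rw [hzero] at h
    simp at h
  set p : Fin 2 → ℝ :=
    fun i => (star (Ψ i) ⬝ᵥ (tensorState ρ (Fin L)).mulVec (Ψ i)).re with hpdef
  set p' : Fin 2 → ℝ :=
    fun i => (star (Ψ' i) ⬝ᵥ (tensorState ρ (Fin L')).mulVec (Ψ' i)).re with hp'def
  have hppos : ∀ i, 0 < p i := fun i =>
    (Complex.lt_def.mp (hTL.dotProduct_mulVec_pos (hΨne i))).1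
  have hp'pos : ∀ i, 0 < p' i := fun i =>
    (Complex.lt_def.mp (hTL'.dotProduct_mulVec_pos (hΨ'ne i))).1
  have hval : ∀ i, star (Ψ i) ⬝ᵥ (tensorState ρ (Fin L)).mulVec (Ψ i) = ((p i : ℝ) : ℂ) := by
    intro i
    have h0 := Complex.lt_def.mp (hTL.dotProduct_mulVec_pos (hΨne i))
    apply Complex.ext
    · simp [hpdef]
    · simp [← h0.2]
  have hval' : ∀ i, star (Ψ' i) ⬝ᵥ (tensorState ρ (Fin L')).mulVec (Ψ' i)
      = ((p' i : ℝ) : ℂ) := by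
    intro i
    have h0 := Complex.lt_def.mp (hTL'.dotProduct_mulVec_pos (hΨ'ne i))
    apply Complex.ext
    · simp [hp'def]
    · simp [← h0.2]
  have hpS : ∀ i, p i = Real.exp (-(S i)) := by
    intro i
    have hSi : S i = -Real.log (p i) := rfl
    rw [hSi, neg_neg, Real.exp_log (hppos i)]
  have hp'S' : ∀ i, p' i = Real.exp (-(S' i)) := by
    intro i
    have hSi : S' i = -Real.log (p' i) := rfl
    rw [hSi, neg_neg, Real.exp_log (hp'pos i)]
  have hdot1 : ∀ i, star (Ψ i) ⬝ᵥ Ψ i = 1 := fun i => dot_self_of_norm _ (hΨnorm i)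
  have hdot1' : ∀ i, star (Ψ' i) ⬝ᵥ Ψ' i = 1 := fun i => dot_self_of_norm _ (hΨ'norm i)
  have horth : ∀ i j : Fin 2, i ≠ j → star (Ψ i) ⬝ᵥ Ψ j = 0 := by
    intro i j hij
    fin_cases i <;> fin_cases j
    · exact absurd rfl hij
    · exact eig_orthogonal hH (Ψ 0) (Ψ 1) (E 0) (E 1) hE.ne (hΨeig 0) (hΨeig 1)
    · exact eig_orthogonal hH (Ψ 1) (Ψ 0) (E 1) (E 0) hE.ne' (hΨeig 1) (hΨeig 0)
    · exact absurd rfl hij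
  -- pick m, m'
  have ha : 0 < E 1 - E 0 := sub_pos.mpr hE
  have h2' : (S 1 - S 0) < 0 ∨
      (E 1 - E 0) * (S' 1 - S' 0) ≠ (S 1 - S 0) * (E' 1 - E' 0) := by
    rcases hyp2 with h | h
    · left
      have hβ : β = (S 1 - S 0) / (E 1 - E 0) := rfl
      rw [hβ, div_neg_iff] at h
      rcases h with ⟨_, h2⟩ | ⟨h1, _⟩
      · linarith
      · exact h1
    · right
      intro heq
      apply h
      show S' 1 - S' 0 = (S 1 - S 0) / (E 1 - E 0) * (E' 1 - E' 0)
      rw [div_mul_eq_mul_div, eq_div_iff ha.ne']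
      linarith [heq]
  obtain ⟨m, m', hm1, hprod⟩ :=
    choose_mm' (E 1 - E 0) (E' 1 - E' 0) (S 1 - S 0) (S' 1 - S' 0) ha hyp1 h2'
  refine ⟨m, m', ?_⟩
  have hdotΦ : ∀ i j : Fin 2,
      star (Phi L L' m m' Ψ Ψ' i) ⬝ᵥ Phi L L' m m' Ψ Ψ' j = if i = j then 1 else 0 := by
    intro i j
    rw [phi_dot L L' m m' Ψ Ψ' j i]
    by_cases hij : i = j
    · subst hij
      rw [if_pos rfl, hdot1 i, hdot1' (1 - i), one_pow, one_pow, one_mul]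
    · rw [if_neg hij, horth i j hij, zero_pow (Nat.one_le_iff_ne_zero.mp hm1), zero_mul]
  set eC : Fin 2 → ℂ :=
    fun i => (((m : ℝ) * E i + (m' : ℝ) * E' (1 - i) : ℝ) : ℂ) with heCdef
  have hereal : ∀ i, star (eC i) = eC i := fun i => by
    simp [heCdef, Complex.star_def, Complex.conj_ofReal]
  have heig : ∀ i, (extOp H (Fin m × Fin L ⊕ Fin m' × Fin L')).mulVec (Phi L L' m m' Ψ Ψ' i)
      = eC i • Phi L L' m m' Ψ Ψ' i := by
    intro i
    have h1 := extOp_mulVec_pow (σ := Fin L) m H (Ψ i) ((E i : ℝ) : ℂ) (hΨeig i)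
    have h2 := extOp_mulVec_pow (σ := Fin L') m' H (Ψ' (1 - i)) ((E' (1 - i) : ℝ) : ℂ)
      (hΨ'eig (1 - i))
    have h3 := extOp_mulVec_tensor H _ _ _ _ h1 h2
    have hc : eC i = (m : ℂ) * ((E i : ℝ) : ℂ) + (m' : ℂ) * ((E' (1 - i) : ℝ) : ℂ) := by
      rw [heCdef]
      push_cast
      ring
    rw [hc]
    exact h3
  rw [work_trace L L' m m' Ψ Ψ' H ρ eC heig hereal hH hdotΦ]
  have hR : ∀ i, star (Phi L L' m m' Ψ Ψ' i) ⬝ᵥ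
      (tensorState ρ (Fin m × Fin L ⊕ Fin m' × Fin L')).mulVec (Phi L L' m m' Ψ Ψ' i)
      = (((p i) ^ m * (p' (1 - i)) ^ m' : ℝ) : ℂ) := by
    intro i
    rw [phi_pairing L L' m m' Ψ Ψ' ρ i i, hval i, hval' (1 - i)]
    push_cast
    ring
  rw [hR 0, hR 1]
  have h10 : (1 - (0 : Fin 2)) = 1 := rfl
  have h11 : (1 - (1 : Fin 2)) = 0 := rfl
  rw [h10, h11]
  have hred : (eC 0 - eC 1) * ((p 0 ^ m * p' 1 ^ m' : ℝ) : ℂ) +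
      (eC 1 - eC 0) * ((p 1 ^ m * p' 0 ^ m' : ℝ) : ℂ)
      = (((((m : ℝ) * E 0 + (m' : ℝ) * E' 1) - ((m : ℝ) * E 1 + (m' : ℝ) * E' 0)) *
          (p 0 ^ m * p' 1 ^ m') +
        (((m : ℝ) * E 1 + (m' : ℝ) * E' 0) - ((m : ℝ) * E 0 + (m' : ℝ) * E' 1)) *
          (p 1 ^ m * p' 0 ^ m') : ℝ) : ℂ) := by
    simp only [heCdef, h10, h11]
    push_cast
    ring
  rw [hred, Complex.ofReal_re]
  -- final real inequality
  have hP0 : p 0 ^ m * p' 1 ^ m' = Real.exp (-((m : ℝ) * S 0 + (m' : ℝ) * S' 1)) := by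
    rw [hpS 0, hp'S' 1, ← Real.exp_nat_mul, ← Real.exp_nat_mul, ← Real.exp_add]
    congr 1
    ring
  have hP1 : p 1 ^ m * p' 0 ^ m' = Real.exp (-((m : ℝ) * S 1 + (m' : ℝ) * S' 0)) := by
    rw [hpS 1, hp'S' 0, ← Real.exp_nat_mul, ← Real.exp_nat_mul, ← Real.exp_add]
    congr 1
    ring
  rw [hP0, hP1]
  rcases mul_pos_iff.mp hprod with ⟨hg, hs⟩ | ⟨hg, hs⟩
  · have hexp : Real.exp (-((m : ℝ) * S 0 + (m' : ℝ) * S' 1)) <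
        Real.exp (-((m : ℝ) * S 1 + (m' : ℝ) * S' 0)) := by
      apply Real.exp_lt_exp.mpr
      nlinarith
    nlinarith
  · have hexp : Real.exp (-((m : ℝ) * S 1 + (m' : ℝ) * S' 0)) <
        Real.exp (-((m : ℝ) * S 0 + (m' : ℝ) * S' 1)) := by
      apply Real.exp_lt_exp.mpr
      nlinarith
    nlinarith
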